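/- Let A be a convex acceptance set in an ordered topological vector space X and S a traded asset such that ρ_{A,S} does not attain −∞. Then the core of Dom(ρ_{A,S}) is nonempty if and only if the core of A is nonempty. In particular, if ρ_{A,S} is finitely valued, then Core(A) is nonempty. -/

import Mathlib

open Filter Topology

variable {X : Type*} [AddCommGroup X] [Module ℝ X] [PartialOrder X]
  [CovariantClass X X (· + ·) (· ≤ ·)] [PosSMulMono ℝ X]
  [TopologicalSpace X] [IsTopologicalAddGroup X] [ContinuousSMul ℝ X]

/-- The risk measure `ρ_{A,S}(x) = inf {m : x + (m/S₀)·S_T ∈ A}`, valued in `EReal`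
(with `inf ∅ = ⊤` and unbounded-below giving `⊥`). -/
noncomputable def rho (A : Set X) (S0 : ℝ) (ST : X) (x : X) : EReal :=
  sInf ((fun r : ℝ => (r : EReal)) '' {r : ℝ | x + (r / S0) • ST ∈ A})

/-- A set is monotone if it contains, with any element, every larger element. -/
def MonotoneSet (A : Set X) : Prop := ∀ x ∈ A, ∀ y, x ≤ y → y ∈ A

/-- An acceptance set: nonempty, proper, and monotone. -/
def AcceptanceSet (A : Set X) : Prop := A.Nonempty ∧ A ≠ Set.univ ∧ MonotoneSet A

/-- The algebraic core (algebraic interior) of a set. -/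
def algCore (A : Set X) : Set X :=
  {x | ∀ y : X, ∃ ε > 0, ∀ l : ℝ, |l| < ε → x + l • y ∈ A}

/-- The domain of finiteness of ρ_{A,S}. -/
noncomputable def rhoDom (A : Set X) (S0 : ℝ) (ST : X) : Set X :=
  {x : X | rho A S0 ST x ≠ ⊤}

/-- if A is a convex acceptance set and ρ_{A,S} never attains -∞, then
the core of the domain of ρ_{A,S} is nonempty iff the core of A is nonempty; in
particular finiteness of ρ_{A,S} implies that Core(A) is nonempty. -/
lemma mem_rhoDom_iff {A : Set X} {S0 : ℝ} {ST x : X} :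
    x ∈ rhoDom A S0 ST ↔ ∃ r : ℝ, x + (r / S0) • ST ∈ A := by
  constructor
  · intro h
    by_contra hc
    push_neg at hc
    apply h
    have he : {r : ℝ | x + (r / S0) • ST ∈ A} = ∅ :=
      Set.eq_empty_iff_forall_notMem.2 hc
    show sInf _ = ⊤
    rw [he]
    simp
  · rintro ⟨r, hr⟩ h
    have h1 : ((r : ℝ) : EReal) ∈ ((fun r : ℝ => (r : EReal)) ''
        {r : ℝ | x + (r / S0) • ST ∈ A}) := Set.mem_image_of_mem _ hr
    have h2 := sInf_le h1
    rw [show sInf ((fun r : ℝ => (r : EReal)) '' {r : ℝ | x + (r / S0) • ST ∈ A})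
        = rho A S0 ST x from rfl, h] at h2
    exact (EReal.coe_ne_top r) (top_le_iff.1 h2)

lemma key_lemma {A : Set X} (hconv : Convex ℝ A) (hmono : MonotoneSet A)
    {S0 : ℝ} {ST : X} (hS0 : 0 < S0) (hST : (0:X) ≤ ST)
    {x₀ y : X} {t₀ m δ : ℝ} (hδ : 0 < δ)
    (ha₀ : x₀ + (t₀ / S0) • ST ∈ A)
    (ha₁ : x₀ + δ • y + (m / S0) • ST ∈ A)
    {l : ℝ} (hl0 : 0 ≤ l) (hl : l < δ / (|m - t₀| + 1)) :
    (x₀ + ((t₀ + 1) / S0) • ST) + l • y ∈ A := by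
  have hden : (0:ℝ) < |m - t₀| + 1 := by positivity
  set lam := l / δ with hlam
  have hlam0 : 0 ≤ lam := div_nonneg hl0 hδ.le
  have hlamc : lam * (|m - t₀| + 1) < 1 := by
    rw [hlam, div_mul_eq_mul_div, div_lt_one hδ]
    calc l * (|m - t₀| + 1) < (δ / (|m - t₀| + 1)) * (|m - t₀| + 1) :=
          mul_lt_mul_of_pos_right hl hden
      _ = δ := by field_simp
  have habs : 0 ≤ |m - t₀| := abs_nonneg _
  have hlam1 : lam ≤ 1 := by nlinarith
  have hmt : lam * (m - t₀) ≤ lam * |m - t₀| :=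
    mul_le_mul_of_nonneg_left (le_abs_self _) hlam0
  have hc : 0 ≤ (1 - lam * (m - t₀)) / S0 := by
    apply div_nonneg _ hS0.le
    nlinarith
  have hmem : (1 - lam) • (x₀ + (t₀ / S0) • ST) +
      lam • (x₀ + δ • y + (m / S0) • ST) ∈ A :=
    hconv ha₀ ha₁ (by linarith) hlam0 (by ring)
  have heq : (x₀ + ((t₀ + 1) / S0) • ST) + l • y =
      ((1 - lam) • (x₀ + (t₀ / S0) • ST) + lam • (x₀ + δ • y + (m / S0) • ST))
        + ((1 - lam * (m - t₀)) / S0) • ST := by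
    have hδ' : δ ≠ 0 := hδ.ne'
    have hS0' : S0 ≠ 0 := hS0.ne'
    rw [hlam]
    match_scalars <;> (field_simp; try ring)
  rw [heq]
  exact hmono _ hmem _ (le_add_of_nonneg_right (smul_nonneg hc hST))

lemma core_point {A : Set X} (hconv : Convex ℝ A) (hmono : MonotoneSet A)
    {S0 : ℝ} {ST : X} (hS0 : 0 < S0) (hST : (0:X) ≤ ST)
    {x₀ : X} (hx₀ : x₀ ∈ algCore (rhoDom A S0 ST)) : (algCore A).Nonempty := by
  have hx₀mem : x₀ ∈ rhoDom A S0 ST := by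
    obtain ⟨ε, hε, h⟩ := hx₀ 0
    have := h 0 (by simpa using hε)
    simpa using this
  obtain ⟨t₀, ht₀⟩ := mem_rhoDom_iff.1 hx₀mem
  refine ⟨x₀ + ((t₀ + 1) / S0) • ST, fun y => ?_⟩
  obtain ⟨ε, hε, h⟩ := hx₀ y
  set δ := ε / 2 with hδdef
  have hδ : 0 < δ := by positivity
  have h1 : x₀ + δ • y ∈ rhoDom A S0 ST := by
    apply h δ
    rw [abs_of_pos hδ]
    linarith
  have h2 : x₀ + δ • (-y) ∈ rhoDom A S0 ST := by
    have := h (-δ) (by rw [abs_neg, abs_of_pos hδ]; linarith)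
    simpa [neg_smul, smul_neg] using this
  obtain ⟨m₁, hm₁⟩ := mem_rhoDom_iff.1 h1
  obtain ⟨m₂, hm₂⟩ := mem_rhoDom_iff.1 h2
  refine ⟨min (δ / (|m₁ - t₀| + 1)) (δ / (|m₂ - t₀| + 1)),
    lt_min (by positivity) (by positivity), fun l hl => ?_⟩
  rcases le_or_gt 0 l with hl0 | hl0
  · have hlt : l < δ / (|m₁ - t₀| + 1) := by
      have := lt_of_abs_lt hl
      exact lt_of_lt_of_le this (min_le_left _ _)
    exact key_lemma hconv hmono hS0 hST hδ ht₀ hm₁ hl0 hlt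
  · have hlt : -l < δ / (|m₂ - t₀| + 1) := by
      have h' : |l| < δ / (|m₂ - t₀| + 1) := lt_of_lt_of_le hl (min_le_right _ _)
      rwa [abs_of_neg hl0] at h'
    have := key_lemma hconv hmono hS0 hST hδ ht₀ hm₂ (by linarith : (0:ℝ) ≤ -l) hlt
    simpa [neg_smul, smul_neg] using this

theorem core_dom_nonempty_iff_core_nonempty (A : Set X) (S0 : ℝ) (ST : X)
    (hA : AcceptanceSet A) (hconv : Convex ℝ A)
    (hS0 : 0 < S0) (hST : 0 ≤ ST) (hSTne : ST ≠ 0)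
    (hnobot : ∀ x : X, rho A S0 ST x ≠ ⊥) :
    ((algCore (rhoDom A S0 ST)).Nonempty ↔ (algCore A).Nonempty) ∧
    ((∀ x : X, rho A S0 ST x ≠ ⊤) → (algCore A).Nonempty) := by
  obtain ⟨hne, hproper, hmono⟩ := hA
  constructor
  · constructor
    · rintro ⟨x₀, hx₀⟩
      exact core_point hconv hmono hS0 hST hx₀
    · rintro ⟨z, hz⟩
      refine ⟨z, fun y => ?_⟩
      obtain ⟨ε, hε, h⟩ := hz y
      refine ⟨ε, hε, fun l hl => ?_⟩
      exact mem_rhoDom_iff.2 ⟨0, by simpa using h l hl⟩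
  · intro hfin
    have h0 : (0:X) ∈ algCore (rhoDom A S0 ST) :=
      fun y => ⟨1, one_pos, fun l _ => hfin _⟩
    exact core_point hconv hmono hS0 hST h0
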